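/- Let T₁, …, T_N be quasi-nonexpansive self-maps of a real Hilbert space H with a common fixed point p, and let α₁, …, α_N ∈ (0,1) with ∑ αᵢ = 1. Then G = ∑ αᵢ·Tᵢ is quasi-nonexpansive and Fix(G) = ⋂ᵢ Fix(Tᵢ). -/

import Mathlib

open scoped RealInnerProductSpace

theorem stmt13 {H : Type*} [NormedAddCommGroup H] [InnerProductSpace ℝ H]
    (N : ℕ) (T : Fin N → H → H) (α : Fin N → ℝ)
    (hα : ∀ i, α i ∈ Set.Ioo (0 : ℝ) 1) (hαsum : ∑ i, α i = 1)
    (p : H) (hp : ∀ i, T i p = p)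
    (hT : ∀ i, ∀ x q : H, T i q = q → ‖T i x - q‖ ≤ ‖x - q‖)
    (G : H → H) (hG : ∀ x, G x = ∑ i, α i • T i x) :
    ({x : H | G x = x} = ⋂ i, {x : H | T i x = x}) ∧
    (∀ x q : H, G q = q → ‖G x - q‖ ≤ ‖x - q‖) := by
  have hdecomp : ∀ x, G x - p = ∑ i, α i • (T i x - p) := by
    intro x
    rw [hG]
    rw [Finset.sum_congr rfl (fun i _ => smul_sub (α i) (T i x) p),
      Finset.sum_sub_distrib, ← Finset.sum_smul, hαsum, one_smul]
  have key : ∀ x, G x = x → ∀ i, T i x = x := by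
    intro x hx i
    set u := x - p with hu
    have hinner : ∀ j, (inner ℝ (T j x - p) u : ℝ) ≤ ‖u‖ ^ 2 := by
      intro j
      calc (inner ℝ (T j x - p) u : ℝ) ≤ ‖T j x - p‖ * ‖u‖ := real_inner_le_norm _ _
        _ ≤ ‖u‖ * ‖u‖ :=
          mul_le_mul_of_nonneg_right (hT j x p (hp j)) (norm_nonneg _)
        _ = ‖u‖ ^ 2 := (sq ‖u‖).symm
    have hsum : ∑ j, α j * (inner ℝ (T j x - p) u : ℝ) = ‖u‖ ^ 2 := by
      have h1 : (inner ℝ (G x - p) u : ℝ) = ‖u‖ ^ 2 := by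
        rw [hx, ← hu, real_inner_self_eq_norm_sq]
      rw [← h1, hdecomp x, sum_inner]
      exact Finset.sum_congr rfl fun j _ => (real_inner_smul_left _ _ _).symm
    have hzero : ∑ j, α j * (‖u‖ ^ 2 - (inner ℝ (T j x - p) u : ℝ)) = 0 := by
      rw [Finset.sum_congr rfl fun j _ => mul_sub (α j) _ _,
        Finset.sum_sub_distrib, hsum, ← Finset.sum_mul, hαsum, one_mul, sub_self]
    have hterm : α i * (‖u‖ ^ 2 - (inner ℝ (T i x - p) u : ℝ)) = 0 := by
      have := (Finset.sum_eq_zero_iff_of_nonneg (fun j _ =>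
        mul_nonneg (le_of_lt (hα j).1) (sub_nonneg.mpr (hinner j)))).mp hzero i
        (Finset.mem_univ i)
      exact this
    have hieq : (inner ℝ (T i x - p) u : ℝ) = ‖u‖ ^ 2 := by
      have hαi := (hα i).1
      have := (mul_eq_zero.mp hterm).resolve_left (ne_of_gt hαi)
      linarith
    have hnorm : ‖T i x - x‖ ^ 2 ≤ 0 := by
      have hle := hT i x p (hp i)
      have hsq : ‖T i x - p‖ ^ 2 ≤ ‖u‖ ^ 2 :=
        pow_le_pow_left₀ (norm_nonneg _) hle 2
      have hexp : ‖T i x - x‖ ^ 2 =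
          ‖T i x - p‖ ^ 2 - 2 * (inner ℝ (T i x - p) u : ℝ) + ‖u‖ ^ 2 := by
        have : T i x - x = (T i x - p) - u := by rw [hu]; abel
        rw [this, norm_sub_sq_real]
      rw [hexp, hieq]; linarith
    have : ‖T i x - x‖ = 0 :=
      le_antisymm (by nlinarith [norm_nonneg (T i x - x)]) (norm_nonneg _)
    have := norm_sub_eq_zero_iff.mp this
    exact this
  constructor
  · ext x
    simp only [Set.mem_setOf_eq, Set.mem_iInter]
    constructor
    · exact key x
    · intro h
      rw [hG, Finset.sum_congr rfl fun i _ => by rw [h i], ← Finset.sum_smul,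
        hαsum, one_smul]
  · intro x q hq
    have hfix := key q hq
    have hdq : G x - q = ∑ i, α i • (T i x - q) := by
      rw [hG, Finset.sum_congr rfl (fun i _ => smul_sub (α i) (T i x) q),
        Finset.sum_sub_distrib, ← Finset.sum_smul, hαsum, one_smul]
    calc ‖G x - q‖ = ‖∑ i, α i • (T i x - q)‖ := by rw [hdq]
      _ ≤ ∑ i, ‖α i • (T i x - q)‖ := norm_sum_le _ _
      _ ≤ ∑ i, α i * ‖x - q‖ := by
        apply Finset.sum_le_sum
        intro i _
        rw [norm_smul, Real.norm_eq_abs, abs_of_pos (hα i).1]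
        exact mul_le_mul_of_nonneg_left (hT i x q (hfix i)) (le_of_lt (hα i).1)
      _ = ‖x - q‖ := by rw [← Finset.sum_mul, hαsum, one_mul]
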